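/- Let K be an absorptive, fully-continuous commutative semiring and let (X_i = P_i)_{1 ≤ i ≤ ℓ} be a polynomial equation system over K in ℓ indeterminates, with induced monotone operator F : K^ℓ → K^ℓ. Then the least fixed point of F (equivalently, the least solution of the system with respect to the componentwise natural order) equals the ℓ-fold iterate of F applied to the zero tuple: lfp F = F^ℓ(0). -/

import Mathlib

/-- An absorptive, fully-continuous commutative semiring: a commutative semiring
whose natural order (`a ≤ b ↔ a + b = b`) is a complete lattice, with `1 + a = 1`,
and such that addition and multiplication commute with suprema and infima of
nonempty chains. -/
class AbsorptiveFC (K : Type*) extends CommSemiring K, CompleteLattice K where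
  absorb : ∀ a : K, 1 + a = 1
  le_iff_add : ∀ a b : K, a ≤ b ↔ a + b = b
  add_sSup_chain : ∀ (a : K) (C : Set K), C.Nonempty → IsChain (· ≤ ·) C →
    a + sSup C = sSup ((fun c => a + c) '' C)
  add_sInf_chain : ∀ (a : K) (C : Set K), C.Nonempty → IsChain (· ≤ ·) C →
    a + sInf C = sInf ((fun c => a + c) '' C)
  mul_sSup_chain : ∀ (a : K) (C : Set K), C.Nonempty → IsChain (· ≤ ·) C →
    a * sSup C = sSup ((fun c => a * c) '' C)
  mul_sInf_chain : ∀ (a : K) (C : Set K), C.Nonempty → IsChain (· ≤ ·) C →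
    a * sInf C = sInf ((fun c => a * c) '' C)

/-- The infinitary power `a^∞ = ⨅ n, a ^ n`. -/
noncomputable def ipow {K : Type*} [AbsorptiveFC K] (a : K) : K := ⨅ n : ℕ, a ^ n

namespace LfpAux

open MvPolynomial

variable {K : Type*} [AbsorptiveFC K]

lemma kle_iff {a b : K} : a ≤ b ↔ a + b = b := AbsorptiveFC.le_iff_add a b

lemma kzero_le (b : K) : (0 : K) ≤ b := kle_iff.2 (zero_add b)

lemma kadd_idem (a : K) : a + a = a := by
  have h : (1 : K) + 1 = 1 := AbsorptiveFC.absorb 1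
  calc a + a = a * (1 + 1) := by ring
    _ = a := by rw [h, mul_one]

lemma kle_add_right (a b : K) : a ≤ a + b :=
  kle_iff.2 (by rw [← add_assoc, kadd_idem])

lemma kadd_le {a b c : K} (h1 : a ≤ c) (h2 : b ≤ c) : a + b ≤ c := by
  have e1 := kle_iff.1 h1
  have e2 := kle_iff.1 h2
  exact kle_iff.2 (by rw [add_assoc, e2, e1])

lemma kmul_le_mul_left (a : K) {b c : K} (h : b ≤ c) : a * b ≤ a * c :=
  kle_iff.2 (by rw [← mul_add, kle_iff.1 h])

lemma kmul_le_mul {a b c d : K} (h1 : a ≤ b) (h2 : c ≤ d) : a * c ≤ b * d := by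
  calc a * c ≤ a * d := kmul_le_mul_left a h2
    _ = d * a := mul_comm _ _
    _ ≤ d * b := kmul_le_mul_left d h1
    _ = b * d := mul_comm _ _

lemma kmul_le_left (a b : K) : a * b ≤ a := by
  have h : b + 1 = 1 := by rw [add_comm]; exact AbsorptiveFC.absorb b
  refine kle_iff.2 ?_
  calc a * b + a = a * (b + 1) := by ring
    _ = a := by rw [h, mul_one]

lemma kmul_le_right (a b : K) : a * b ≤ b := by
  rw [mul_comm]; exact kmul_le_left b a

lemma kprod_le_prod {ι : Type*} (s : Finset ι) (f g : ι → K)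
    (h : ∀ i ∈ s, f i ≤ g i) : ∏ i ∈ s, f i ≤ ∏ i ∈ s, g i := by
  classical
  induction s using Finset.induction_on with
  | empty => simp
  | insert _ _ hx ih =>
    rename_i a s'
    rw [Finset.prod_insert hx, Finset.prod_insert hx]
    exact kmul_le_mul (h a (Finset.mem_insert_self a s'))
      (ih fun i hi => h i (Finset.mem_insert_of_mem hi))

lemma ksum_le {ι : Type*} (s : Finset ι) (f : ι → K) (b : K)
    (h : ∀ i ∈ s, f i ≤ b) : ∑ i ∈ s, f i ≤ b := by
  classical
  induction s using Finset.induction_on with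
  | empty => simpa using kzero_le b
  | insert _ _ hx ih =>
    rename_i a s'
    rw [Finset.sum_insert hx]
    exact kadd_le (h a (Finset.mem_insert_self a s'))
      (ih fun i hi => h i (Finset.mem_insert_of_mem hi))

lemma kle_sum {ι : Type*} [DecidableEq ι] {s : Finset ι} (f : ι → K) {i : ι}
    (h : i ∈ s) : f i ≤ ∑ x ∈ s, f x := by
  rw [← Finset.add_sum_erase s f h]; exact kle_add_right _ _

lemma kprod_le_single {ι : Type*} [DecidableEq ι] {s : Finset ι} (f : ι → K) {i : ι}
    (h : i ∈ s) : ∏ x ∈ s, f x ≤ f i := by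
  rw [← Finset.mul_prod_erase s f h]; exact kmul_le_left _ _

variable {ℓ : ℕ}

lemma keval_eq (x : Fin ℓ → K) (p : MvPolynomial (Fin ℓ) K) :
    eval x p = ∑ d ∈ p.support, coeff d p * ∏ j : Fin ℓ, x j ^ d j := by
  rw [eval_eq]
  refine Finset.sum_congr rfl fun d _ => ?_
  congr 1
  exact Finset.prod_subset (Finset.subset_univ _) fun j _ hj => by
    rw [Finsupp.notMem_support_iff.1 hj, pow_zero]

lemma kterm_le_eval (x : Fin ℓ → K) (p : MvPolynomial (Fin ℓ) K) {d : Fin ℓ →₀ ℕ}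
    (hd : d ∈ p.support) :
    coeff d p * ∏ j : Fin ℓ, x j ^ d j ≤ eval x p := by
  rw [keval_eq]
  exact kle_sum (fun d => coeff d p * ∏ j : Fin ℓ, x j ^ d j) hd

lemma kprod_sigma_pow (x : Fin ℓ → K) (d : Fin ℓ →₀ ℕ) :
    ∏ p : (Σ j : Fin ℓ, Fin (d j)), x p.1 = ∏ j : Fin ℓ, x j ^ d j := by
  rw [← Finset.univ_sigma_univ, Finset.prod_sigma]
  simp [Finset.prod_const]

variable (P : Fin ℓ → MvPolynomial (Fin ℓ) K)

/-- Derivation trees of height `< k` with root variable `i`. -/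
def Tr : ℕ → Fin ℓ → Type
  | 0, _ => PEmpty
  | (k+1), i =>
    Σ d : {d : Fin ℓ →₀ ℕ // d ∈ (P i).support},
      ∀ p : (Σ j : Fin ℓ, Fin (d.1 j)), Tr k p.1

instance instIsEmptyTr (i : Fin ℓ) : IsEmpty (Tr P 0 i) := ⟨fun t => PEmpty.elim t⟩

instance instFintypeTr : ∀ (k : ℕ) (i : Fin ℓ), Fintype (Tr P k i)
  | 0, _ => ⟨∅, fun t => PEmpty.elim t⟩
  | (k+1), i =>
    letI : ∀ j, Fintype (Tr P k j) := fun j => instFintypeTr k j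
    inferInstanceAs (Fintype (Σ d : {d : Fin ℓ →₀ ℕ // d ∈ (P i).support},
      ∀ p : (Σ j : Fin ℓ, Fin (d.1 j)), Tr P k p.1))

/-- The yield (value) of a derivation tree. -/
def yieldT : ∀ {k : ℕ} {i : Fin ℓ}, Tr P k i → K
  | 0, _, t => PEmpty.elim t
  | (k+1), i, t =>
    coeff t.1.1 (P i) * ∏ p : (Σ j : Fin ℓ, Fin (t.1.1 j)), yieldT (t.2 p)

/-- The set of variables occurring in a derivation tree. -/
def tvarsT : ∀ {k : ℕ} {i : Fin ℓ}, Tr P k i → Finset (Fin ℓ)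
  | 0, _, t => PEmpty.elim t
  | (k+1), i, t =>
    insert i (Finset.univ.biUnion
      fun p : (Σ j : Fin ℓ, Fin (t.1.1 j)) => tvarsT (t.2 p))

lemma yieldT_succ {k : ℕ} {i : Fin ℓ} (t : Tr P (k+1) i) :
    yieldT P t = coeff t.1.1 (P i) *
      ∏ p : (Σ j : Fin ℓ, Fin (t.1.1 j)), yieldT P (t.2 p) := rfl

lemma tvarsT_succ {k : ℕ} {i : Fin ℓ} (t : Tr P (k+1) i) :
    tvarsT P t = insert i (Finset.univ.biUnion
      fun p : (Σ j : Fin ℓ, Fin (t.1.1 j)) => tvarsT P (t.2 p)) := rfl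

lemma root_mem_tvarsT {k : ℕ} {i : Fin ℓ} (t : Tr P (k+1) i) : i ∈ tvarsT P t := by
  rw [tvarsT_succ]; exact Finset.mem_insert_self _ _

lemma child_tvarsT {k : ℕ} {i : Fin ℓ} (t : Tr P (k+1) i)
    (p : Σ j : Fin ℓ, Fin (t.1.1 j)) : tvarsT P (t.2 p) ⊆ tvarsT P t := by
  rw [tvarsT_succ]
  intro x hx
  exact Finset.mem_insert_of_mem (Finset.mem_biUnion.2 ⟨p, Finset.mem_univ p, hx⟩)

lemma yieldT_child_le {k : ℕ} {i : Fin ℓ} (t : Tr P (k+1) i)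
    (p : Σ j : Fin ℓ, Fin (t.1.1 j)) : yieldT P t ≤ yieldT P (t.2 p) := by
  rw [yieldT_succ]
  exact le_trans (kmul_le_right _ _) (kprod_le_single _ (Finset.mem_univ p))

/-- Extraction: from a tree containing variable `i`, extract a subtree with root `i`,
with at least as large a yield and no new variables. -/
lemma extract : ∀ (k : ℕ) {j : Fin ℓ} (u : Tr P k j) (i : Fin ℓ), i ∈ tvarsT P u →
    ∃ m, m ≤ k ∧ ∃ s : Tr P m i, yieldT P u ≤ yieldT P s ∧ tvarsT P s ⊆ tvarsT P u := by
  intro k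
  induction k with
  | zero => intro j u; exact PEmpty.elim u
  | succ k ih =>
    intro j u i hi
    rw [tvarsT_succ] at hi
    rcases Finset.mem_insert.1 hi with h | h
    · subst h
      exact ⟨k+1, le_refl _, u, le_refl _, subset_refl _⟩
    · obtain ⟨p, -, hp⟩ := Finset.mem_biUnion.1 h
      obtain ⟨m, hm, s, h1, h2⟩ := ih (u.2 p) i hp
      exact ⟨m, le_trans hm (Nat.le_succ k), s,
        le_trans (yieldT_child_le P u p) h1, h2.trans (child_tvarsT P u p)⟩

variable (F : (Fin ℓ → K) → (Fin ℓ → K))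

/-- Pumping lemma: the yield of any tree whose variables lie in `S` is bounded by
the `|S|`-th Kleene iterate. -/
lemma yieldT_le (hF : ∀ x i, F x i = eval x (P i)) : ∀ (n : ℕ) (S : Finset (Fin ℓ)), S.card ≤ n →
    ∀ (k : ℕ) {i : Fin ℓ} (t : Tr P k i), tvarsT P t ⊆ S →
      yieldT P t ≤ F^[S.card] 0 i := by
  intro n
  induction n with
  | zero =>
    intro S hS k i t ht
    cases k with
    | zero => exact PEmpty.elim t
    | succ k =>
      exfalso
      have hmem := ht (root_mem_tvarsT P t)
      have hempty : S = ∅ := Finset.card_eq_zero.1 (Nat.le_zero.1 hS)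
      rw [hempty] at hmem
      exact Finset.notMem_empty i hmem
  | succ n ih =>
    intro S hS k
    induction k using Nat.strong_induction_on with
    | _ k ihk =>
      intro i t ht
      cases k with
      | zero => exact PEmpty.elim t
      | succ k' =>
        by_cases hrep : ∃ p : (Σ j : Fin ℓ, Fin (t.1.1 j)), i ∈ tvarsT P (t.2 p)
        · obtain ⟨p, hp⟩ := hrep
          obtain ⟨m, hm, s, h1, h2⟩ := extract P k' (t.2 p) i hp
          refine le_trans (le_trans (yieldT_child_le P t p) h1)
            (ihk m (Nat.lt_succ_of_le hm) s ?_)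
          exact h2.trans ((child_tvarsT P t p).trans ht)
        · push_neg at hrep
          have hiS : i ∈ S := ht (root_mem_tvarsT P t)
          have hsub : ∀ p : (Σ j : Fin ℓ, Fin (t.1.1 j)),
              tvarsT P (t.2 p) ⊆ S.erase i := by
            intro p x hx
            refine Finset.mem_erase.2 ⟨?_, ht ((child_tvarsT P t p) hx)⟩
            intro hxi; exact hrep p (hxi ▸ hx)
          have hcard : (S.erase i).card + 1 = S.card := Finset.card_erase_add_one hiS
          have hch : ∀ p : (Σ j : Fin ℓ, Fin (t.1.1 j)),
              yieldT P (t.2 p) ≤ F^[(S.erase i).card] 0 p.1 :=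
            fun p => ih (S.erase i) (by omega) k' (t.2 p) (hsub p)
          calc yieldT P t
              = coeff t.1.1 (P i) *
                ∏ p : (Σ j : Fin ℓ, Fin (t.1.1 j)), yieldT P (t.2 p) := yieldT_succ P t
            _ ≤ coeff t.1.1 (P i) *
                ∏ p : (Σ j : Fin ℓ, Fin (t.1.1 j)), F^[(S.erase i).card] 0 p.1 :=
                  kmul_le_mul_left _ (kprod_le_prod _ _ _ fun p _ => hch p)
            _ = coeff t.1.1 (P i) *
                ∏ j : Fin ℓ, (F^[(S.erase i).card] 0) j ^ (t.1.1 j) := by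
                  rw [kprod_sigma_pow]
            _ ≤ eval (F^[(S.erase i).card] 0) (P i) := kterm_le_eval _ _ t.1.2
            _ = F^[S.card] 0 i := by
                  rw [← hF, ← Function.iterate_succ_apply' F, Nat.succ_eq_add_one, hcard]

/-- Expansion: the Kleene iterates are sums of yields of trees. -/
lemma expandT (hF : ∀ x i, F x i = eval x (P i)) : ∀ (k : ℕ) (i : Fin ℓ), F^[k] 0 i = ∑ t : Tr P k i, yieldT P t := by
  intro k
  induction k with
  | zero => intro i; simp
  | succ k ih =>
    intro i
    rw [Function.iterate_succ_apply', hF, keval_eq]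
    have hsum := Fintype.sum_equiv
      (⟨fun t => t, fun t => t, fun _ => rfl, fun _ => rfl⟩ :
        Tr P (k+1) i ≃ (Σ d : {d : Fin ℓ →₀ ℕ // d ∈ (P i).support},
          ∀ p : (Σ j : Fin ℓ, Fin (d.1 j)), Tr P k p.1))
      (fun t => yieldT P t)
      (fun t => coeff t.1.1 (P i) *
        ∏ p : (Σ j : Fin ℓ, Fin (t.1.1 j)), yieldT P (t.2 p))
      (fun t => rfl)
    rw [hsum, ← Finset.univ_sigma_univ, Finset.sum_sigma,
      ← Finset.sum_coe_sort (P i).support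
        (fun d => coeff d (P i) * ∏ j : Fin ℓ, (F^[k] 0) j ^ d j)]
    refine Finset.sum_congr rfl fun d _ => ?_
    dsimp only
    have h1 : ∏ j : Fin ℓ, (F^[k] 0) j ^ (d.1 j)
        = ∏ p : (Σ j : Fin ℓ, Fin (d.1 j)), ∑ t : Tr P k p.1, yieldT P t := by
      rw [← kprod_sigma_pow]
      exact Finset.prod_congr rfl fun p _ => ih p.1
    have h2 := Finset.prod_univ_sum
      (κ := fun p : (Σ j : Fin ℓ, Fin (d.1 j)) => Tr P k p.1)
      (fun _ => (Finset.univ : Finset _)) (fun _ t => yieldT P t)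
    rw [h1, h2, Fintype.piFinset_univ, Finset.mul_sum]

end LfpAux

/-- the least solution of a polynomial equation system in `ℓ`
indeterminates over an absorptive, fully-continuous commutative semiring is
reached after `ℓ` steps of the fixed-point iteration from the zero tuple. -/
theorem lfp_eq_iterate {K : Type*} [AbsorptiveFC K] (ℓ : ℕ)
    (P : Fin ℓ → MvPolynomial (Fin ℓ) K)
    (F : (Fin ℓ → K) → (Fin ℓ → K))
    (hF : ∀ x i, F x i = MvPolynomial.eval x (P i))
    (hmono : Monotone F) :
    OrderHom.lfp ⟨F, hmono⟩ = F^[ℓ] 0 := by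
  have key : ∀ k, F^[k] (0 : Fin ℓ → K) ≤ F^[ℓ] 0 := by
    intro k
    rw [Pi.le_def]
    intro i
    rw [LfpAux.expandT P F hF k i]
    refine LfpAux.ksum_le _ _ _ fun t _ => ?_
    have h := LfpAux.yieldT_le P F hF ℓ Finset.univ (by simp) k t (Finset.subset_univ _)
    rwa [Finset.card_univ, Fintype.card_fin] at h
  have hfix : F (F^[ℓ] 0) = F^[ℓ] 0 := by
    apply le_antisymm
    · have h := key (ℓ+1)
      rwa [Function.iterate_succ_apply'] at h
    · have h0 : (0 : Fin ℓ → K) ≤ F 0 := by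
        rw [Pi.le_def]; intro i; exact LfpAux.kzero_le _
      have h := hmono.iterate ℓ h0
      rwa [← Function.iterate_succ_apply F ℓ 0,
        Function.iterate_succ_apply' F ℓ 0] at h
  apply le_antisymm
  · exact OrderHom.lfp_le ⟨F, hmono⟩ (le_of_eq hfix)
  · have h : ∀ k, F^[k] (0 : Fin ℓ → K) ≤ OrderHom.lfp ⟨F, hmono⟩ := by
      intro k
      induction k with
      | zero =>
        rw [Pi.le_def]; intro i; exact LfpAux.kzero_le _
      | succ k ihk =>
        rw [Function.iterate_succ_apply']
        calc F (F^[k] 0) ≤ F (OrderHom.lfp ⟨F, hmono⟩) := hmono ihk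
          _ = OrderHom.lfp ⟨F, hmono⟩ := OrderHom.map_lfp ⟨F, hmono⟩
    exact h ℓ
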